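/- Let ξ_1, …, ξ_n be i.i.d. Rademacher random variables (taking values +1 and −1 each with probability 1/2), let T ⊆ ℝ^n be a nonempty finite set, and for each i ∈ {1,…,n} let φ_i : ℝ → ℝ be 1-Lipschitz with φ_i(0) = 0. Then E[ max_{t ∈ T} ∑_{i=1}^n ξ_i·φ_i(t_i) ] ≤ E[ max_{t ∈ T} ∑_{i=1}^n ξ_i·t_i ]. -/

import Mathlib

open MeasureTheory ProbabilityTheory
open Finset

noncomputable def rcSgn (b : Bool) : ℝ := if b then 1 else -1

lemma rcSgn_injective : Function.Injective rcSgn := by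
  intro a b h
  cases a <;> cases b <;> simp [rcSgn] at h ⊢ <;> norm_num at h

lemma rcKey {α : Type*} (T : Finset α) (hT : T.Nonempty) (A f g : α → ℝ)
    (h : ∀ t ∈ T, ∀ s ∈ T, f t - f s ≤ |g t - g s|) :
    (T.sup' hT fun t => A t + f t) + (T.sup' hT fun t => A t - f t)
      ≤ (T.sup' hT fun t => A t + g t) + (T.sup' hT fun t => A t - g t) := by
  obtain ⟨t₀, ht₀, h1⟩ := T.exists_mem_eq_sup' hT (fun t => A t + f t)
  obtain ⟨s₀, hs₀, h2⟩ := T.exists_mem_eq_sup' hT (fun t => A t - f t)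
  rw [h1, h2]
  rcases abs_cases (g t₀ - g s₀) with ⟨he, _⟩ | ⟨he, _⟩
  · have := h t₀ ht₀ s₀ hs₀
    have b1 : A t₀ + g t₀ ≤ T.sup' hT fun t => A t + g t := Finset.le_sup' (f := fun t => A t + g t) ht₀
    have b2 : A s₀ - g s₀ ≤ T.sup' hT fun t => A t - g t := Finset.le_sup' (f := fun t => A t - g t) hs₀
    rw [he] at this; linarith
  · have := h t₀ ht₀ s₀ hs₀
    have b1 : A s₀ + g s₀ ≤ T.sup' hT fun t => A t + g t := Finset.le_sup' (f := fun t => A t + g t) hs₀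
    have b2 : A t₀ - g t₀ ≤ T.sup' hT fun t => A t - g t := Finset.le_sup' (f := fun t => A t - g t) ht₀
    rw [he] at this; linarith

lemma rcStep {n : ℕ} (T : Finset (Fin n → ℝ)) (hT : T.Nonempty)
    (g g' : Fin n → ℝ → ℝ) (k : Fin n)
    (hk : ∀ x y : ℝ, g k x - g k y ≤ |g' k x - g' k y|)
    (hoff : ∀ i, i ≠ k → g i = g' i) :
    ∑ ε : Fin n → Bool, T.sup' hT (fun t => ∑ i, rcSgn (ε i) * g i (t i))
      ≤ ∑ ε : Fin n → Bool, T.sup' hT (fun t => ∑ i, rcSgn (ε i) * g' i (t i)) := by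
  set F : (Fin n → Bool) → ℝ := fun ε => T.sup' hT (fun t => ∑ i, rcSgn (ε i) * g i (t i))
  set F' : (Fin n → Bool) → ℝ := fun ε => T.sup' hT (fun t => ∑ i, rcSgn (ε i) * g' i (t i))
  have hflip : Function.Involutive (fun ε : Fin n → Bool => Function.update ε k (!ε k)) := by
    intro ε
    funext i
    rcases eq_or_ne i k with rfl | hi
    · simp
    · simp [Function.update_of_ne hi]
  set flip := fun ε : Fin n → Bool => Function.update ε k (!ε k)
  have hsumflip : ∀ (H : (Fin n → Bool) → ℝ),
      ∑ ε, H (flip ε) = ∑ ε, H ε := fun H => Equiv.sum_comp hflip.toPerm H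
  have hpair : ∀ ε : Fin n → Bool, F ε + F (flip ε) ≤ F' ε + F' (flip ε) := by
    intro ε
    set A : (Fin n → ℝ) → ℝ := fun t => ∑ i ∈ univ.erase k, rcSgn (ε i) * g i (t i) with hA
    have hAsplit : ∀ (h : Fin n → ℝ → ℝ) (b : Bool), (∀ i, i ≠ k → h i = g i) →
        ∀ t : Fin n → ℝ, ∑ i, rcSgn (Function.update ε k b i) * h i (t i)
          = A t + rcSgn b * h k (t k) := by
      intro h b hh t
      rw [← Finset.add_sum_erase _ _ (mem_univ k), Function.update_self, add_comm]
      congr 1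
      apply Finset.sum_congr rfl
      intro i hi
      rw [Function.update_of_ne (Finset.ne_of_mem_erase hi), hh i (Finset.ne_of_mem_erase hi)]
    have hεself : Function.update ε k (ε k) = ε := Function.update_eq_self k ε
    have e1 : F ε = T.sup' hT fun t => A t + rcSgn (ε k) * g k (t k) := by
      apply Finset.sup'_congr hT rfl
      intro t _
      rw [← hAsplit g (ε k) (fun _ _ => rfl), hεself]
    have e2 : F (flip ε) = T.sup' hT fun t => A t - rcSgn (ε k) * g k (t k) := by
      apply Finset.sup'_congr hT rfl
      intro t _
      rw [hAsplit g (!ε k) (fun _ _ => rfl) t]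
      cases hb : ε k <;> simp [rcSgn] <;> ring
    have e3 : F' ε = T.sup' hT fun t => A t + rcSgn (ε k) * g' k (t k) := by
      apply Finset.sup'_congr hT rfl
      intro t _
      rw [show (∑ i, rcSgn (ε i) * g' i (t i)) = ∑ i, rcSgn (Function.update ε k (ε k) i) * g' i (t i) by rw [hεself],
        hAsplit g' (ε k) (fun i hi => (hoff i hi).symm)]
    have e4 : F' (flip ε) = T.sup' hT fun t => A t - rcSgn (ε k) * g' k (t k) := by
      apply Finset.sup'_congr hT rfl
      intro t _
      rw [hAsplit g' (!ε k) (fun i hi => (hoff i hi).symm)]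
      cases hb : ε k <;> simp [rcSgn] <;> ring
    rw [e1, e2, e3, e4]
    apply rcKey T hT A (fun t => rcSgn (ε k) * g k (t k)) (fun t => rcSgn (ε k) * g' k (t k))
    intro t _ s _
    have habs : |rcSgn (ε k) * g' k (t k) - rcSgn (ε k) * g' k (s k)| = |g' k (t k) - g' k (s k)| := by
      rw [← mul_sub, abs_mul]
      cases ε k <;> simp [rcSgn]
    rw [habs]
    cases ε k
    · simp only [rcSgn, if_neg Bool.false_ne_true]
      have := hk (s k) (t k)
      rw [abs_sub_comm] at this
      linarith
    · simpa [rcSgn] using hk (t k) (s k)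
  calc ∑ ε, F ε = (∑ ε, F ε + ∑ ε, F (flip ε)) / 2 := by rw [hsumflip F]; ring
    _ = (∑ ε, (F ε + F (flip ε))) / 2 := by rw [Finset.sum_add_distrib]
    _ ≤ (∑ ε, (F' ε + F' (flip ε))) / 2 := by
        have := Finset.sum_le_sum (s := (univ : Finset (Fin n → Bool))) (fun ε _ => hpair ε)
        linarith
    _ = (∑ ε, F' ε + ∑ ε, F' (flip ε)) / 2 := by rw [Finset.sum_add_distrib]
    _ = ∑ ε, F' ε := by rw [hsumflip F']; ring

lemma rcDiscrete {n : ℕ} (T : Finset (Fin n → ℝ)) (hT : T.Nonempty)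
    (φ : Fin n → ℝ → ℝ) (hφlip : ∀ i, LipschitzWith 1 (φ i)) :
    ∑ ε : Fin n → Bool, T.sup' hT (fun t => ∑ i, rcSgn (ε i) * φ i (t i))
      ≤ ∑ ε : Fin n → Bool, T.sup' hT (fun t => ∑ i, rcSgn (ε i) * t i) := by
  set G : ℕ → Fin n → ℝ → ℝ := fun m i => if (i : ℕ) < m then (fun x => x) else φ i with hG
  have hmono : ∀ m : ℕ,
      ∑ ε : Fin n → Bool, T.sup' hT (fun t => ∑ i, rcSgn (ε i) * φ i (t i))
        ≤ ∑ ε : Fin n → Bool, T.sup' hT (fun t => ∑ i, rcSgn (ε i) * G m i (t i)) := by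
    intro m
    induction m with
    | zero => simp [hG]
    | succ m ih =>
      refine ih.trans ?_
      by_cases hm : m < n
      · apply rcStep T hT (G m) (G (m + 1)) ⟨m, hm⟩
        · intro x y
          simp only [hG, lt_irrefl, if_neg (lt_irrefl m), if_pos (Nat.lt_succ_self m)]
          calc φ ⟨m, hm⟩ x - φ ⟨m, hm⟩ y ≤ |φ ⟨m, hm⟩ x - φ ⟨m, hm⟩ y| := le_abs_self _
            _ ≤ |x - y| := by
                have := (hφlip ⟨m, hm⟩).dist_le_mul x y
                simpa [Real.dist_eq] using this
        · intro i hi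
          have : (i : ℕ) < m ↔ (i : ℕ) < m + 1 := by
            constructor
            · exact fun h => h.trans (Nat.lt_succ_self m)
            · intro h
              rcases Nat.lt_succ_iff_lt_or_eq.mp h with h | h
              · exact h
              · exact absurd (Fin.ext h : i = ⟨m, hm⟩) hi
          simp only [hG]
          by_cases h : (i : ℕ) < m
          · rw [if_pos h, if_pos (this.mp h)]
          · rw [if_neg h, if_neg (fun h' => h (this.mpr h'))]
      · have : G (m + 1) = G m := by
          funext i x
          have h1 : (i : ℕ) < m := lt_of_lt_of_le i.isLt (Nat.le_of_not_lt hm)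
          simp only [hG, if_pos h1, if_pos (h1.trans (Nat.lt_succ_self m))]
        rw [this]
  have := hmono n
  have hGn : ∀ i : Fin n, G n i = fun x => x := fun i => by
    simp only [hG, if_pos i.isLt]
  calc _ ≤ _ := this
    _ = _ := by
      apply Finset.sum_congr rfl
      intro ε _
      apply Finset.sup'_congr hT rfl
      intro t _
      apply Finset.sum_congr rfl
      intro i _
      rw [hGn i]

lemma rcIntegral {Ω : Type*} [MeasurableSpace Ω] (μ : Measure Ω) [IsProbabilityMeasure μ]
    (n : ℕ) (ξ : Fin n → Ω → ℝ)
    (hξmeas : ∀ i, Measurable (ξ i))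
    (hξindep : iIndepFun ξ μ)
    (hξdist : ∀ i, μ {ω | ξ i ω = 1} = 1 / 2 ∧ μ {ω | ξ i ω = -1} = 1 / 2)
    (v : (Fin n → ℝ) → ℝ) :
    ∫ ω, v (fun i => ξ i ω) ∂μ
      = ((1 : ℝ) / 2) ^ n * ∑ ε : Fin n → Bool, v (fun i => rcSgn (ε i)) := by
  have hpre : ∀ (i : Fin n) (c : ℝ), ξ i ⁻¹' {c} = {ω | ξ i ω = c} := by
    intro i c; ext ω; simp
  have hhalf : ∀ (i : Fin n) (b : Bool), μ (ξ i ⁻¹' {rcSgn b}) = 1 / 2 := by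
    intro i b
    rw [hpre]
    cases b
    · simpa [rcSgn] using (hξdist i).2
    · simpa [rcSgn] using (hξdist i).1
  set E : (Fin n → Bool) → Set Ω := fun ε => ⋂ i, ξ i ⁻¹' {rcSgn (ε i)} with hE
  have hEmeas : ∀ ε, MeasurableSet (E ε) := fun ε =>
    MeasurableSet.iInter fun i => (hξmeas i) (measurableSet_singleton _)
  have hEmu : ∀ ε, μ (E ε) = (1 / 2 : ENNReal) ^ n := by
    intro ε
    have := hξindep.measure_inter_preimage_eq_mul (Finset.univ)
      (sets := fun i => {rcSgn (ε i)}) (fun i _ => measurableSet_singleton _)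
    show μ (⋂ i, ξ i ⁻¹' {rcSgn (ε i)}) = (1 / 2 : ENNReal) ^ n
    have heq : (⋂ i, ξ i ⁻¹' {rcSgn (ε i)}) = ⋂ i ∈ Finset.univ, ξ i ⁻¹' {rcSgn (ε i)} := by
      simp
    rw [heq, this]
    simp [hhalf, Finset.prod_const]
  -- null set where some ξ i is not a sign
  set N : Set Ω := ⋃ i, ((ξ i ⁻¹' {1}) ∪ (ξ i ⁻¹' {-1}))ᶜ with hN
  have hNnull : μ N = 0 := by
    rw [hN]
    refine measure_iUnion_null fun i => ?_
    have hm : MeasurableSet ((ξ i ⁻¹' {1}) ∪ (ξ i ⁻¹' {-1})) :=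
      ((hξmeas i) (measurableSet_singleton _)).union ((hξmeas i) (measurableSet_singleton _))
    have hdisj : Disjoint (ξ i ⁻¹' {1}) (ξ i ⁻¹' {-1}) := by
      rw [Set.disjoint_left]
      intro ω h1 h2
      simp only [Set.mem_preimage, Set.mem_singleton_iff] at h1 h2
      rw [h1] at h2; norm_num at h2
    have hu : μ ((ξ i ⁻¹' {1}) ∪ (ξ i ⁻¹' {-1})) = 1 := by
      rw [measure_union hdisj ((hξmeas i) (measurableSet_singleton _)), hpre, hpre,
        (hξdist i).1, (hξdist i).2]
      rw [ENNReal.div_add_div_same, show (1 + 1 : ENNReal) = 2 from by norm_num]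
      exact ENNReal.div_self (a := 2) (by norm_num) (by norm_num)
    rw [measure_compl hm (by finiteness), hu]
    simp
  set c : (Fin n → Bool) → ℝ := fun ε => v (fun i => rcSgn (ε i)) with hc
  set Gfun : Ω → ℝ := fun ω => ∑ ε : Fin n → Bool, (E ε).indicator (fun _ => c ε) ω with hGfun
  have hae : (fun ω => v (fun i => ξ i ω)) =ᵐ[μ] Gfun := by
    have hmem : ∀ᵐ ω ∂μ, ω ∉ N := by
      rw [← measure_eq_zero_iff_ae_notMem]
      exact hNnull
    filter_upwards [hmem] with ω hω
    have hsign : ∀ i, ξ i ω = 1 ∨ ξ i ω = -1 := by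
      intro i
      by_contra h
      push_neg at h
      apply hω
      rw [hN]
      refine Set.mem_iUnion.mpr ⟨i, ?_⟩
      simp only [Set.mem_compl_iff, Set.mem_union, Set.mem_preimage, Set.mem_singleton_iff]
      tauto
    set ε₀ : Fin n → Bool := fun i => decide (ξ i ω = 1) with hε₀
    have hξε₀ : ∀ i, ξ i ω = rcSgn (ε₀ i) := by
      intro i
      rcases hsign i with h | h
      · simp [hε₀, h, rcSgn]
      · have h1 : ξ i ω ≠ 1 := by rw [h]; norm_num
        simp only [hε₀, rcSgn, h]
        norm_num
    have hωE : ω ∈ E ε₀ := Set.mem_iInter.mpr fun i => by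
      simp [hξε₀ i]
    have h1 : v (fun i => ξ i ω) = c ε₀ := by
      rw [hc]
      congr 1
      funext i
      exact hξε₀ i
    have h0 : ∀ ε ∈ (Finset.univ : Finset (Fin n → Bool)), ε ≠ ε₀ →
        (E ε).indicator (fun _ => c ε) ω = 0 := by
      intro ε _ hne
      apply Set.indicator_of_notMem
      intro hωε
      apply hne
      funext i
      have hi : ξ i ω = rcSgn (ε i) := by
        have := Set.mem_iInter.mp hωε i
        simpa using this
      exact rcSgn_injective (by rw [← hi, hξε₀ i])
    have h2 : Gfun ω = c ε₀ := by
      show (∑ ε : Fin n → Bool, (E ε).indicator (fun _ => c ε) ω) = c ε₀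
      rw [Finset.sum_eq_single ε₀ h0 (fun h => absurd (Finset.mem_univ ε₀) h),
        Set.indicator_of_mem hωE]
    rw [h1, h2]
  rw [integral_congr_ae hae, hGfun]
  rw [integral_finset_sum _ (fun ε _ => (integrable_const (c ε)).indicator (hEmeas ε))]
  have : ∀ ε : Fin n → Bool,
      ∫ ω, (E ε).indicator (fun _ => c ε) ω ∂μ = ((1 : ℝ) / 2) ^ n * c ε := by
    intro ε
    rw [integral_indicator_const (c ε) (hEmeas ε), measureReal_def, hEmu ε, smul_eq_mul]
    congr 1
    rw [ENNReal.toReal_pow]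
    norm_num
  simp_rw [this]
  rw [← Finset.mul_sum]

/-- Rademacher contraction principle: if `ξ₁,…,ξₙ` are i.i.d. Rademacher signs,
`T ⊆ ℝⁿ` is finite and nonempty, and each `φᵢ` is 1-Lipschitz with `φᵢ(0) = 0`, then
`E[max_{t ∈ T} ∑ᵢ ξᵢ·φᵢ(tᵢ)] ≤ E[max_{t ∈ T} ∑ᵢ ξᵢ·tᵢ]`. -/
theorem rademacher_contraction
    {Ω : Type*} [MeasurableSpace Ω] (μ : Measure Ω) [IsProbabilityMeasure μ]
    (n : ℕ) (ξ : Fin n → Ω → ℝ)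
    (hξmeas : ∀ i, Measurable (ξ i))
    (hξindep : iIndepFun ξ μ)
    (hξdist : ∀ i, μ {ω | ξ i ω = 1} = 1 / 2 ∧ μ {ω | ξ i ω = -1} = 1 / 2)
    (T : Finset (Fin n → ℝ)) (hT : T.Nonempty)
    (φ : Fin n → ℝ → ℝ)
    (hφlip : ∀ i, LipschitzWith 1 (φ i)) (hφ0 : ∀ i, φ i 0 = 0) :
    ∫ ω, (T.sup' hT fun t => ∑ i, ξ i ω * φ i (t i)) ∂μ ≤
      ∫ ω, (T.sup' hT fun t => ∑ i, ξ i ω * t i) ∂μ := by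
  have h1 := rcIntegral μ n ξ hξmeas hξindep hξdist
    (fun x => T.sup' hT fun t => ∑ i, x i * φ i (t i))
  have h2 := rcIntegral μ n ξ hξmeas hξindep hξdist
    (fun x => T.sup' hT fun t => ∑ i, x i * t i)
  simp only at h1 h2
  rw [h1, h2]
  apply mul_le_mul_of_nonneg_left (rcDiscrete T hT φ hφlip)
  positivity
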